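/- Let p > 2 be prime and suppose N_p = (2^p + 1)/3 is prime. Define s_0 = 4, s_{k+1} = s_k² − 2. Then N_p divides s_{p−1} − 5 − 9·(p/3), where (p/3) is the Legendre symbol of p mod 3. -/

import Mathlib

def lucasLehmerSeq : ℕ → ℤ
  | 0 => 4
  | k + 1 => lucasLehmerSeq k ^ 2 - 2

open LucasLehmer LucasLehmer.X

lemma my_X_charP (q : ℕ+) : CharP (LucasLehmer.X q) q := by
  constructor
  intro x
  constructor
  · intro h
    have h1 := congrArg Prod.fst h
    simp only [fst_natCast, zero_fst] at h1
    exact (ZMod.natCast_eq_zero_iff x q).mp h1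
  · intro h
    refine X.ext ?_ ?_
    · simp only [fst_natCast, zero_fst]
      exact (ZMod.natCast_eq_zero_iff x q).mpr h
    · simp

lemma my_X_pow_fst (q : ℕ+) (x : LucasLehmer.X q) (h : x.2 = 0) (k : ℕ) :
    (x ^ k).1 = x.1 ^ k ∧ (x ^ k).2 = 0 := by
  induction k with
  | zero => simp
  | succ k ih =>
    rw [pow_succ, pow_succ, LucasLehmer.X.mul_fst, LucasLehmer.X.mul_snd, ih.1, ih.2, h]
    constructor <;> ring

lemma my_seq_eq_s (k : ℕ) : lucasLehmerSeq k = LucasLehmer.s k := by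
  induction k with
  | zero => rfl
  | succ k ih => show lucasLehmerSeq k ^ 2 - 2 = LucasLehmer.s k ^ 2 - 2; rw [ih]

set_option maxHeartbeats 2000000 in
theorem wagstaff_lucas_lehmer (p : ℕ) (hp : p.Prime) (hp2 : 2 < p)
    (hN : Nat.Prime ((2 ^ p + 1) / 3)) :
    (((2 ^ p + 1) / 3 : ℕ) : ℤ) ∣
      lucasLehmerSeq (p - 1) - 5 - 9 * legendreSym 3 p := by
  have hodd : p % 2 = 1 := Nat.odd_iff.mp (hp.odd_of_ne_two (by omega))
  -- 3 divides 2^p + 1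
  have h3 : 2 ^ p % 3 = 2 := by
    obtain ⟨k, hk⟩ : ∃ k, p = 2 * k + 1 := ⟨p / 2, by omega⟩
    subst hk
    rw [pow_succ, pow_mul, Nat.mul_mod, Nat.pow_mod]
    norm_num
  have hNval : 3 * ((2 ^ p + 1) / 3) = 2 ^ p + 1 := Nat.mul_div_cancel' (by omega)
  set N : ℕ := (2 ^ p + 1) / 3 with hNdef
  -- the case p = 3
  by_cases hp3 : p = 3
  · subst hp3
    have hN3 : N = 3 := by omega
    rw [hN3]
    have hL0 : legendreSym 3 3 = 0 := (legendreSym.eq_zero_iff 3 3).mpr (by decide)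
    have : legendreSym 3 ((3 : ℕ) : ℤ) = legendreSym 3 (3 : ℤ) := by norm_num
    rw [show ((3 : ℕ) : ℤ) = (3 : ℤ) by norm_num, hL0]
    show (3 : ℤ) ∣ lucasLehmerSeq 2 - 5 - 9 * 0
    norm_num [lucasLehmerSeq]
  -- now p ≥ 5
  have hp5 : 5 ≤ p := by
    rcases Nat.lt_or_ge p 5 with h | h
    · interval_cases p <;> simp_all
    · exact h
  have h32 : 32 ≤ 2 ^ p := by calc (32:ℕ) = 2 ^ 5 := by norm_num
                                 _ ≤ 2 ^ p := Nat.pow_le_pow_right (by norm_num) hp5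
  have h8 : 2 ^ p % 8 = 0 := by
    have : 2 ^ p = 8 * 2 ^ (p - 3) := by
      rw [show (8:ℕ) = 2 ^ 3 by norm_num, ← pow_add]; congr 1; omega
    omega
  have hN8 : N % 8 = 3 := by omega
  have hNgt : 11 ≤ N := by omega
  have hpm3 : p % 3 ≠ 0 := by
    intro h
    have h3d : (3 : ℕ) ∣ p := by omega
    rcases (Nat.Prime.eq_one_or_self_of_dvd hp 3 h3d) with h | h <;> omega
  -- N ≡ p mod 3
  have h2p9 : 2 ^ p % 9 = 2 ^ (p % 6) % 9 := by
    conv_lhs => rw [show p = 6 * (p / 6) + p % 6 from (Nat.div_add_mod p 6).symm]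
    rw [pow_add, pow_mul, Nat.mul_mod, Nat.pow_mod]
    norm_num
  have hmod3 : N % 3 = p % 3 := by
    have h6 : p % 6 = 1 ∨ p % 6 = 5 := by omega
    rcases h6 with h6 | h6 <;> rw [h6] at h2p9 <;> norm_num at h2p9 <;> omega
  haveI : Fact (Nat.Prime N) := ⟨hN⟩
  -- legendre symbol facts
  have hL2 : legendreSym N 2 = -1 := by
    rw [legendreSym.at_two (by omega : N ≠ 2)]
    have := ZMod.χ₈_nat_mod_eight N
    rw [hN8] at this
    rw [this]; decide
  have hrec : legendreSym N 3 = - legendreSym 3 N := by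
    have := legendreSym.quadratic_reciprocity_three_mod_four (p := 3) (q := N)
      (by norm_num) (by omega)
    rw [show ((3:ℕ):ℤ) = (3:ℤ) from rfl] at this
    exact this
  have hLcong : legendreSym 3 (N : ℤ) = legendreSym 3 (p : ℤ) := by
    rw [legendreSym.mod 3 (N : ℤ), legendreSym.mod 3 (p : ℤ)]
    congr 1
    omega
  have hL3 : legendreSym N 3 = - legendreSym 3 (p : ℤ) := by
    rw [hrec, hLcong]
  have hLpm : legendreSym 3 (p : ℤ) = 1 ∨ legendreSym 3 (p : ℤ) = -1 := by
    have hsq : legendreSym 3 (p : ℤ) ^ 2 = 1 := by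
      apply legendreSym.sq_one
      rw [Int.cast_natCast, Ne, ZMod.natCast_eq_zero_iff]
      omega
    rw [sq] at hsq
    exact mul_self_eq_one_iff.mp hsq
  -- set up the ring X q = (ZMod N)[√3]
  haveI : NeZero N := ⟨by omega⟩
  set q : ℕ+ := ⟨N, by omega⟩ with hqdef
  haveI : Fact (Nat.Prime (q : ℕ)) := ⟨hN⟩
  haveI hCharP : CharP (LucasLehmer.X q) N := my_X_charP q
  set Λ : LucasLehmer.X q := ((0 : ZMod q), (1 : ZMod q)) with hΛ
  have hΛ2 : Λ ^ 2 = 3 := by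
    rw [sq]; refine X.ext ?_ ?_ <;> simp only [X.mul_fst, X.mul_snd] <;> simp [hΛ]
  have hω : (ω : LucasLehmer.X q) = 2 + Λ := by
    refine X.ext ?_ ?_ <;> simp only [ω, X.add_fst, X.add_snd] <;> simp [hΛ]
  have hωb : (ωb : LucasLehmer.X q) = 2 - Λ := by
    refine X.ext ?_ ?_ <;> simp only [ωb, sub_eq_add_neg, X.add_fst, X.add_snd, X.neg_fst, X.neg_snd] <;> simp [hΛ]
  -- Euler's criterion, lifted to X q
  have hsc3 : (3 : LucasLehmer.X q) ^ (N / 2) = ((legendreSym N 3 : ℤ) : LucasLehmer.X q) := by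
    have h := legendreSym.eq_pow N 3
    have hc := my_X_pow_fst q (3 : LucasLehmer.X q) (by simp) (N / 2)
    refine X.ext ?_ ?_
    · rw [hc.1, fst_intCast, ofNat_fst]; exact_mod_cast h.symm
    · rw [hc.2, snd_intCast]
  have hsc2 : (2 : LucasLehmer.X q) ^ (N / 2) = ((legendreSym N 2 : ℤ) : LucasLehmer.X q) := by
    have h := legendreSym.eq_pow N 2
    have hc := my_X_pow_fst q (2 : LucasLehmer.X q) (by simp) (N / 2)
    refine X.ext ?_ ?_
    · rw [hc.1, fst_intCast, ofNat_fst]; exact_mod_cast h.symm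
    · rw [hc.2, snd_intCast]
  have hNsplit : N = 2 * (N / 2) + 1 := by omega
  have hΛN : Λ ^ N = ((legendreSym N 3 : ℤ) : LucasLehmer.X q) * Λ := by
    conv_lhs => rw [hNsplit]
    rw [pow_succ, pow_mul, hΛ2, hsc3]
  have hfrobα : (1 + Λ) ^ N = 1 + ((legendreSym N 3 : ℤ) : LucasLehmer.X q) * Λ := by
    rw [add_pow_char (p := N) (1 : LucasLehmer.X q) Λ, one_pow, hΛN]
  have hNodd : Odd N := by rw [Nat.odd_iff]; omega
  have hfrobβ : (1 - Λ) ^ N = 1 - ((legendreSym N 3 : ℤ) : LucasLehmer.X q) * Λ := by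
    rw [sub_eq_add_neg, sub_eq_add_neg, add_pow_char (p := N) (1 : LucasLehmer.X q) (-Λ), one_pow,
      hNodd.neg_pow, hΛN]
  set E := 2 ^ (p - 1) with hEdef
  have h2E : (2 : LucasLehmer.X q) ^ E = -2 := by
    have h2N : (2 : LucasLehmer.X q) ^ N = 2 := by
      have hNsplit' : N = N / 2 * 2 + 1 := by omega
      conv_lhs => rw [hNsplit']
      rw [pow_succ, pow_mul, hsc2, hL2]
      push_cast; ring
    have hE : E = N + N / 2 := by
      have h2p : 2 ^ p = 2 * 2 ^ (p - 1) := by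
        conv_lhs => rw [show p = (p - 1) + 1 by omega]
        ring
      rw [hEdef]; omega
    rw [hE, pow_add, h2N, hsc2, hL2]
    push_cast; ring
  have hαβ : (1 + Λ) * (1 - Λ) = -2 := by linear_combination -hΛ2
  have hα2 : (1 + Λ) ^ 2 = 2 * ω := by rw [hω]; linear_combination hΛ2
  have hβ2 : (1 - Λ) ^ 2 = 2 * ωb := by rw [hωb]; linear_combination hΛ2
  have h2pE : 2 ^ p = 2 * E := by
    rw [hEdef, ← pow_succ']; congr 1; omega
  have hA1 : (1 + Λ) ^ (2 ^ p) = -2 * (ω : LucasLehmer.X q) ^ E := by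
    rw [h2pE, pow_mul, hα2, mul_pow, h2E]
  have hB1 : (1 - Λ) ^ (2 ^ p) = -2 * (ωb : LucasLehmer.X q) ^ E := by
    rw [h2pE, pow_mul, hβ2, mul_pow, h2E]
  have hA2 : (1 + Λ) ^ (2 ^ p) * (1 + Λ) = ((1 + Λ) ^ N) ^ 3 := by
    rw [← pow_succ, ← pow_mul]; congr 1; omega
  have hB2 : (1 - Λ) ^ (2 ^ p) * (1 - Λ) = ((1 - Λ) ^ N) ^ 3 := by
    rw [← pow_succ, ← pow_mul]; congr 1; omega
  have hωE : 4 * (ω : LucasLehmer.X q) ^ E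
      = (1 + ((legendreSym N 3 : ℤ) : LucasLehmer.X q) * Λ) ^ 3 * (1 - Λ) := by
    have h := hA2
    rw [hA1, hfrobα] at h
    linear_combination (1 - Λ) * h + 2 * (ω : LucasLehmer.X q) ^ E * hαβ
  have hωbE : 4 * (ωb : LucasLehmer.X q) ^ E
      = (1 - ((legendreSym N 3 : ℤ) : LucasLehmer.X q) * Λ) ^ 3 * (1 + Λ) := by
    have h := hB2
    rw [hB1, hfrobβ] at h
    linear_combination (1 + Λ) * h + 2 * (ωb : LucasLehmer.X q) ^ E * hαβ
  have hmain : ((4 * LucasLehmer.s (p - 1) - 20 - 36 * legendreSym 3 (p:ℤ) : ℤ)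
      : LucasLehmer.X q) = 0 := by
    have hcf := LucasLehmer.X.closed_form (q := q) (p - 1)
    rcases hLpm with h1 | h1
    · have hc : ((legendreSym N 3 : ℤ) : LucasLehmer.X q) = -1 := by
        rw [hL3, h1]; push_cast; ring
      rw [hc] at hωE hωbE
      push_cast [h1]
      rw [hcf]
      linear_combination hωE + hωbE + (2 * Λ ^ 2 + 18) * hΛ2
    · have hc : ((legendreSym N 3 : ℤ) : LucasLehmer.X q) = 1 := by
        rw [hL3, h1]; push_cast; ring
      rw [hc] at hωE hωbE
      push_cast [h1]
      rw [hcf]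
      linear_combination hωE + hωbE + (-2 * Λ ^ 2 - 6) * hΛ2
  have hz1 : ((4 * LucasLehmer.s (p - 1) - 20 - 36 * legendreSym 3 (p:ℤ) : ℤ) : ZMod N) = 0 := by
    have h := congrArg Prod.fst hmain
    simp only [fst_intCast, zero_fst] at h
    exact h
  rw [ZMod.intCast_zmod_eq_zero_iff_dvd] at hz1
  rw [my_seq_eq_s]
  have hNprime : Prime (N : ℤ) := Nat.prime_iff_prime_int.mp hN
  have hz2 : (N : ℤ) ∣ 4 * (LucasLehmer.s (p - 1) - 5 - 9 * legendreSym 3 (p:ℤ)) := by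
    have h4 : (4 * (LucasLehmer.s (p - 1) - 5 - 9 * legendreSym 3 (p:ℤ)) : ℤ)
        = 4 * LucasLehmer.s (p - 1) - 20 - 36 * legendreSym 3 (p:ℤ) := by ring
    rw [h4]; exact hz1
  rcases hNprime.dvd_mul.mp hz2 with h | h
  · exfalso
    have := Int.le_of_dvd (by norm_num) h
    omega
  · exact h
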